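/- Let τ be an irrational real number and r₁, r₂ ∈ ℝ, and let G be the subgroup of diffeomorphisms of ℝ³ generated by τ₁(x,y,z) = (x+1, y+τ, z), τ₂(x,y,z) = (x, y+1, z) and τ₃(x,y,z) = (x+r₁, y+r₂, z+1). (i) If β, t ∈ ℝ and J, K : ℝ → ℝ are functions such that the bijection φ(x,y,z) = (x + βy + J(z), y − K(z), z + t) normalizes G, then β = 0. (ii) If γ, t ∈ ℝ are such that the bijection φ(x,y,z) = (x + γz, y, z + t) normalizes G, then γ = 0. -/

import Mathlib

noncomputable section

/-- The bijection `(x,y,z) ↦ (x + φ(y,z), y + ψ(z), z + b)` of `ℝ³`. -/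
def affMap (φ : ℝ × ℝ → ℝ) (ψ : ℝ → ℝ) (b : ℝ) : Equiv.Perm (ℝ × ℝ × ℝ) where
  toFun p := (p.1 + φ p.2, p.2.1 + ψ p.2.2, p.2.2 + b)
  invFun p := (p.1 - φ (p.2.1 - ψ (p.2.2 - b), p.2.2 - b), p.2.1 - ψ (p.2.2 - b), p.2.2 - b)
  left_inv := by rintro ⟨x, y, z⟩; simp
  right_inv := by rintro ⟨x, y, z⟩; simp

/-- The group `Γ_{n,c₁,c₂}`, generated by `(x,y,z) ↦ (x+1,y,z)`,
`(x,y,z) ↦ (x+c₁,y+1,z)` and `(x,y,z) ↦ (x+ny+c₂,y,z+1)`. -/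
def Gamma (n : ℕ) (c₁ c₂ : ℝ) : Subgroup (Equiv.Perm (ℝ × ℝ × ℝ)) :=
  Subgroup.closure
    { affMap (fun _ => 1) (fun _ => 0) 0,
      affMap (fun _ => c₁) (fun _ => 1) 0,
      affMap (fun q => n * q.1 + c₂) (fun _ => 0) 1 }

/-- Translation by a vector `v`. -/
def tr (v : ℝ × ℝ × ℝ) : Equiv.Perm (ℝ × ℝ × ℝ) :=
  affMap (fun _ => v.1) (fun _ => v.2.1) v.2.2

lemma tr_apply (v p : ℝ × ℝ × ℝ) :
    tr v p = (p.1 + v.1, p.2.1 + v.2.1, p.2.2 + v.2.2) := rfl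

lemma tr_mul (v w : ℝ × ℝ × ℝ) : tr v * tr w = tr (v + w) := by
  apply Equiv.ext
  intro p
  simp only [Equiv.Perm.mul_apply, tr_apply, Prod.fst_add, Prod.snd_add, Prod.mk.injEq]
  refine ⟨by ring, by ring, by ring⟩

lemma tr_inv (v : ℝ × ℝ × ℝ) : (tr v)⁻¹ = tr (-v) := by
  apply Equiv.ext
  intro p
  show (tr v).symm p = tr (-v) p
  simp only [tr, affMap, Equiv.coe_fn_symm_mk, Equiv.coe_fn_mk, Prod.fst_neg, Prod.snd_neg,
    Prod.mk.injEq]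
  refine ⟨by ring, by ring, by ring⟩

lemma tr_zero : tr 0 = 1 := by
  apply Equiv.ext
  intro p
  simp [tr_apply, Prod.ext_iff]

/-- The candidate subgroup: all translations by `a(1,τ,0)+b(0,1,0)+c(r₁,r₂,1)`, `a,b,c ∈ ℤ`. -/
def latt (τ r₁ r₂ : ℝ) : Subgroup (Equiv.Perm (ℝ × ℝ × ℝ)) where
  carrier := {g | ∃ a b c : ℤ, g = tr (a + c * r₁, a * τ + b + c * r₂, (c : ℝ))}
  mul_mem' := by
    rintro g g' ⟨a, b, c, rfl⟩ ⟨a', b', c', rfl⟩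
    refine ⟨a + a', b + b', c + c', ?_⟩
    rw [tr_mul]
    congr 1
    simp only [Prod.mk_add_mk, Prod.mk.injEq]
    push_cast
    refine ⟨by ring, by ring, by ring⟩
  one_mem' := by
    refine ⟨0, 0, 0, ?_⟩
    rw [← tr_zero]
    congr 1; simp [Prod.ext_iff]
  inv_mem' := by
    rintro g ⟨a, b, c, rfl⟩
    refine ⟨-a, -b, -c, ?_⟩
    rw [tr_inv]
    congr 1
    simp only [Prod.neg_mk, Prod.mk.injEq]
    push_cast
    refine ⟨by ring, by ring, by ring⟩

lemma int_eq_zero_of_mul_irrational {τ : ℝ} (hτ : Irrational τ) {a b k : ℤ}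
    (h : (a : ℝ) * τ + b = k) : a = 0 := by
  by_contra ha
  have h1 : Irrational ((a : ℝ) * τ) := (hτ.intCast_mul ha)
  have h2 : (a : ℝ) * τ = ((k - b : ℤ) : ℝ) := by push_cast; linarith
  rw [h2] at h1
  exact (Int.not_irrational _) h1

/-- With `G` the group of translations generated by `τ₁(x,y,z)=(x+1,y+τ,z)`,
`τ₂(x,y,z)=(x,y+1,z)`, `τ₃(x,y,z)=(x+r₁,y+r₂,z+1)` (`τ` irrational):
(i) if `φ(x,y,z) = (x + βy + J(z), y − K(z), z + t)` normalizes `G` then `β = 0`;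
(ii) if `φ(x,y,z) = (x + γz, y, z + t)` normalizes `G` then `γ = 0`. -/
theorem stmt_17 (τ : ℝ) (hτ : Irrational τ) (r₁ r₂ : ℝ)
    (G : Subgroup (Equiv.Perm (ℝ × ℝ × ℝ)))
    (hG : G = Subgroup.closure
      { affMap (fun _ => 1) (fun _ => τ) 0,
        affMap (fun _ => 0) (fun _ => 1) 0,
        affMap (fun _ => r₁) (fun _ => r₂) 1 }) :
    (∀ (β t : ℝ) (J K : ℝ → ℝ),
      affMap (fun w => β * w.1 + J w.2) (fun z => -(K z)) t ∈ Subgroup.normalizer (G : Set (Equiv.Perm (ℝ × ℝ × ℝ))) → β = 0) ∧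
    (∀ γ t : ℝ, affMap (fun w => γ * w.2) (fun _ => 0) t ∈ Subgroup.normalizer (G : Set (Equiv.Perm (ℝ × ℝ × ℝ))) → γ = 0) := by
  -- G is contained in the lattice of translations
  have hGle : G ≤ latt τ r₁ r₂ := by
    rw [hG]
    apply (Subgroup.closure_le _).mpr
    rintro g hg
    simp only [Set.mem_insert_iff, Set.mem_singleton_iff] at hg
    rcases hg with rfl | rfl | rfl
    · exact ⟨1, 0, 0, by show tr (1, τ, 0) = _; congr 1; simp [Prod.ext_iff]⟩
    · exact ⟨0, 1, 0, by show tr (0, 1, 0) = _; congr 1; simp [Prod.ext_iff]⟩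
    · exact ⟨0, 0, 1, by show tr (r₁, r₂, 1) = _; congr 1; simp [Prod.ext_iff]⟩
  constructor
  · intro β t J K hmem
    set φ := affMap (fun w => β * w.1 + J w.2) (fun z => -(K z)) t with hφ
    have hτ₂ : affMap (fun _ => (0:ℝ)) (fun _ => 1) 0 ∈ G := by
      rw [hG]; exact Subgroup.subset_closure (by simp)
    have hconj : φ * affMap (fun _ => (0:ℝ)) (fun _ => 1) 0 * φ⁻¹ ∈ G :=
      (Subgroup.mem_normalizer_iff.mp hmem _).mp hτ₂
    obtain ⟨a, b, c, heq⟩ := hGle hconj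
    have h0 : (φ * affMap (fun _ => (0:ℝ)) (fun _ => 1) 0 * φ⁻¹) (φ (0, 0, 0))
        = tr (a + c * r₁, a * τ + b + c * r₂, (c : ℝ)) (φ (0, 0, 0)) := by rw [heq]
    simp only [Equiv.Perm.mul_apply, Equiv.Perm.coe_inv, Equiv.symm_apply_apply, tr_apply] at h0
    simp only [hφ, affMap, Equiv.coe_fn_mk, Prod.mk.injEq] at h0
    obtain ⟨h1, h2, h3⟩ := h0
    norm_num at h1 h2 h3
    subst h3
    have hab : (a : ℝ) * τ + b = ((1 : ℤ) : ℝ) := by push_cast; push_cast at h2; linarith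
    have ha : a = 0 := int_eq_zero_of_mul_irrational hτ hab
    subst ha
    push_cast at h1
    linarith
  · intro γ t hmem
    set φ := affMap (fun w : ℝ × ℝ => γ * w.2) (fun _ => (0:ℝ)) t with hφ
    have hτ₃ : affMap (fun _ => r₁) (fun _ => r₂) 1 ∈ G := by
      rw [hG]; exact Subgroup.subset_closure (by simp)
    have hconj : φ * affMap (fun _ => r₁) (fun _ => r₂) 1 * φ⁻¹ ∈ G :=
      (Subgroup.mem_normalizer_iff.mp hmem _).mp hτ₃
    obtain ⟨a, b, c, heq⟩ := hGle hconj
    have h0 : (φ * affMap (fun _ => r₁) (fun _ => r₂) 1 * φ⁻¹) (φ (0, 0, 0))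
        = tr (a + c * r₁, a * τ + b + c * r₂, (c : ℝ)) (φ (0, 0, 0)) := by rw [heq]
    simp only [Equiv.Perm.mul_apply, Equiv.Perm.coe_inv, Equiv.symm_apply_apply, tr_apply] at h0
    simp only [hφ, affMap, Equiv.coe_fn_mk, Prod.mk.injEq] at h0
    obtain ⟨h1, h2, h3⟩ := h0
    norm_num at h1 h2 h3
    have hc : c = 1 := by exact_mod_cast (by linarith : (c : ℝ) = 1)
    subst hc
    have hab : (a : ℝ) * τ + b = ((0 : ℤ) : ℝ) := by push_cast; push_cast at h2; linarith
    have ha : a = 0 := int_eq_zero_of_mul_irrational hτ hab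
    subst ha
    push_cast at h1
    linarith
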